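/- arXiv:1503.02324 — 5 statements merged into one kernel-verified Lean document; each statement's English description precedes it below -/
import Mathlib

section
/- Let X be a normal projective variety, D a big ℝ-divisor, Γ a prime divisor, and set F := D − σ_Γ(D)·Γ. Then σ_Γ(F) = 0, σ_{Γ'}(F) = σ_{Γ'}(D) for every prime divisor Γ' ≠ Γ, and the natural inclusion H^0(X, mF) ⊆ H^0(X, mD) is an equality for every positive real number m. -/
/-- An abstract model of the divisor theory of a proper normal algebraic variety
over a field `k`.  `K` is the function field, `Prime` is the set of prime (Weil)
divisors, and `ord Γ f` is the order of vanishing of the rational function `f`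
along the prime divisor `Γ`. -/
structure NormalProperVariety (k : Type) [Field k] where
  /-- The function field `K(X)`. -/
  K : Type
  [fieldK : Field K]
  [algK : Algebra k K]
  /-- The set of prime (Weil) divisors on `X`. -/
  Prime : Type
  /-- `ord Γ f` is the order of vanishing of `f` along `Γ`. -/
  ord : Prime → K → ℤ
  ord_mul : ∀ (Γ : Prime) {f g : K}, f ≠ 0 → g ≠ 0 →
      ord Γ (f * g) = ord Γ f + ord Γ g
  ord_add : ∀ (Γ : Prime) {f g : K}, f ≠ 0 → g ≠ 0 → f + g ≠ 0 →
      min (ord Γ f) (ord Γ g) ≤ ord Γ (f + g)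
  ord_const : ∀ (Γ : Prime) (c : k), c ≠ 0 → ord Γ (algebraMap k K c) = 0
  finite_ord : ∀ {f : K}, f ≠ 0 → {Γ : Prime | ord Γ f ≠ 0}.Finite

attribute [instance] NormalProperVariety.fieldK NormalProperVariety.algK

namespace NormalProperVariety

variable {k : Type} [Field k] (X : NormalProperVariety k)

open Classical

/-- ℝ-divisors on `X`: finite formal `ℝ`-linear combinations of prime divisors. -/
abbrev Div : Type := X.Prime →₀ ℝ

/-- The divisor `div(f)` of a rational function (by convention `0` for `f = 0`). -/
noncomputable def divOf (f : X.K) : X.Div :=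
  if hf : f = 0 then 0
  else Finsupp.ofSupportFinite (fun Γ => (X.ord Γ f : ℝ))
    (Set.Finite.subset (X.finite_ord hf) (by
      intro Γ hΓ
      simp only [Function.mem_support, ne_eq, Int.cast_eq_zero] at hΓ
      exact hΓ))

/-- The set of principal divisors `div(f)`, `f ∈ K(X)*`. -/
def Principal : Set X.Div := {D | ∃ f : X.K, f ≠ 0 ∧ D = X.divOf f}

/-- `ℝ`-linear equivalence: `D - D' = Σ aᵢ div(fᵢ)` with `aᵢ ∈ ℝ`. -/
def REquiv (D D' : X.Div) : Prop := D - D' ∈ Submodule.span ℝ X.Principal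

/-- `ℚ`-linear equivalence: `D - D' = Σ aᵢ div(fᵢ)` with `aᵢ ∈ ℚ`. -/
def QEquiv (D D' : X.Div) : Prop := D - D' ∈ Submodule.span ℚ X.Principal

/-- `ℤ`-linear equivalence: `D - D' = div(f)`. -/
def ZEquiv (D D' : X.Div) : Prop := ∃ f : X.K, f ≠ 0 ∧ D - D' = X.divOf f

/-- `H⁰(X, 𝒪_X(D)) = H⁰(X, 𝒪_X(⌊D⌋))` as a subset of the function field, namely
`{f ∈ K(X)* : div(f) + D ≥ 0} ∪ {0}`.  (Since `ord` takes integer values,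
replacing `D` by its round-down `⌊D⌋` does not change this set.) -/
def H0 (D : X.Div) : Set X.K :=
  {f : X.K | f = 0 ∨ ∀ Γ : X.Prime, 0 ≤ (X.ord Γ f : ℝ) + D Γ}

/-- `h⁰(D) = dim_k H⁰(X, 𝒪_X(⌊D⌋))`. -/
noncomputable def h0 (D : X.Div) : ℕ := Set.finrank k (X.H0 D)

/-- The volume `vol(D) = limsup_{m → ∞} h⁰(mD) / (mⁿ / n!)`, where `n = dim X`. -/
noncomputable def vol (n : ℕ) (D : X.Div) : ℝ :=
  Filter.limsup (fun m : ℝ => (X.h0 (m • D) : ℝ) * (n.factorial : ℝ) / m ^ n)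
    Filter.atTop

/-- `D` is big iff `vol(D) > 0` (`n = dim X`). -/
def IsBig (n : ℕ) (D : X.Div) : Prop := 0 < X.vol n D

/-- Nakayama's `σ_Γ(D) = inf { mult_Γ D' : D' ∼_ℝ D, D' ≥ 0 }`. -/
noncomputable def sigma (D : X.Div) (Γ : X.Prime) : ℝ :=
  sInf {t : ℝ | ∃ D' : X.Div, X.REquiv D' D ∧ 0 ≤ D' ∧ t = D' Γ}

/-- The negative part `N_σ(D) = Σ_Γ σ_Γ(D) · Γ` of the divisorial Zariski
decomposition (by convention `0` in the degenerate case where infinitely many of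
the `σ_Γ(D)` are nonzero). -/
noncomputable def Nsigma (D : X.Div) : X.Div :=
  if h : (Function.support fun Γ => X.sigma D Γ).Finite then
    Finsupp.ofSupportFinite _ h
  else 0

/-- The positive part `P_σ(D) = D - N_σ(D)`. -/
noncomputable def Psigma (D : X.Div) : X.Div := D - X.Nsigma D

/-- A big ℝ-divisor is movable if `N_σ(D) = 0`. -/
def Movable (D : X.Div) : Prop := X.Nsigma D = 0

end NormalProperVariety


section AuxLemmas

open NormalProperVariety

variable {k : Type} [Field k] (X : NormalProperVariety k)

lemma divOf_apply {f : X.K} (hf : f ≠ 0) (Γ : X.Prime) :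
    X.divOf f Γ = (X.ord Γ f : ℝ) := by
  rw [NormalProperVariety.divOf, dif_neg hf]
  exact congrFun Finsupp.ofSupportFinite_coe Γ

/-- From a nonzero section of `H⁰(m • D)` build an effective divisor ℝ-equivalent to `D`. -/
lemma effective_of_section (D : X.Div) {m : ℝ} (hm : 0 < m) {f : X.K} (hf : f ≠ 0)
    (h : ∀ Γ' : X.Prime, 0 ≤ (X.ord Γ' f : ℝ) + (m • D) Γ') :
    X.REquiv (D + m⁻¹ • X.divOf f) D ∧ 0 ≤ D + m⁻¹ • X.divOf f ∧
      ∀ Γ' : X.Prime, (D + m⁻¹ • X.divOf f) Γ' = D Γ' + m⁻¹ * (X.ord Γ' f : ℝ) := by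
  have happ : ∀ Γ' : X.Prime, (D + m⁻¹ • X.divOf f) Γ' = D Γ' + m⁻¹ * (X.ord Γ' f : ℝ) := by
    intro Γ'
    rw [Finsupp.add_apply, Finsupp.smul_apply, divOf_apply X hf, smul_eq_mul]
  refine ⟨?_, ?_, happ⟩
  · rw [NormalProperVariety.REquiv, add_sub_cancel_left]
    exact Submodule.smul_mem _ _ (Submodule.subset_span ⟨f, hf, rfl⟩)
  · rw [Finsupp.le_def]
    intro Γ'
    have h' := h Γ'
    rw [Finsupp.smul_apply, smul_eq_mul] at h'
    rw [Finsupp.coe_zero, Pi.zero_apply, happ Γ']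
    have hmi : 0 < m⁻¹ := inv_pos.mpr hm
    have h2 := mul_nonneg hmi.le h'
    rw [mul_add, inv_mul_cancel_left₀ (ne_of_gt hm)] at h2
    linarith

/-- A big divisor is ℝ-equivalent to an effective divisor. -/
lemma exists_effective (n : ℕ) (D : X.Div) (hD : X.IsBig n D) :
    ∃ E : X.Div, X.REquiv E D ∧ 0 ≤ E := by
  by_contra hcon
  push_neg at hcon
  have hzero : ∀ m : ℝ, 0 < m → X.h0 (m • D) = 0 := by
    intro m hm
    have hset : X.H0 (m • D) = {0} := by
      ext f
      simp only [NormalProperVariety.H0, Set.mem_setOf_eq, Set.mem_singleton_iff]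
      constructor
      · rintro (rfl | hcond)
        · rfl
        · by_contra hf
          obtain ⟨h1, h2, _⟩ := effective_of_section X D hm hf hcond
          exact hcon _ h1 h2
      · rintro rfl; exact Or.inl rfl
    rw [NormalProperVariety.h0, hset]
    simp [Set.finrank]
  have hev : (fun m : ℝ => (X.h0 (m • D) : ℝ) * (n.factorial : ℝ) / m ^ n)
      =ᶠ[Filter.atTop] (fun _ => (0 : ℝ)) := by
    filter_upwards [Filter.eventually_gt_atTop (0 : ℝ)] with m hm
    rw [hzero m hm]; simp
  have : X.vol n D = 0 := by
    rw [NormalProperVariety.vol, Filter.limsup_congr hev, Filter.limsup_const]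
  rw [NormalProperVariety.IsBig, this] at hD
  exact lt_irrefl 0 hD

end AuxLemmas

/-- Let `D` be a big ℝ-divisor on a normal projective variety,
`Γ` a prime divisor and `F := D - σ_Γ(D)·Γ`.  Then `σ_Γ(F) = 0`,
`σ_{Γ'}(F) = σ_{Γ'}(D)` for every prime divisor `Γ' ≠ Γ`, and
`H⁰(X, mF) = H⁰(X, mD)` for every positive real `m`. -/
theorem sigma_sub_sigma_single {k : Type} [Field k]
    (X : NormalProperVariety k) (n : ℕ) (D : X.Div) (hD : X.IsBig n D)
    (Γ : X.Prime) :
    X.sigma (D - X.sigma D Γ • Finsupp.single Γ 1) Γ = 0 ∧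
      (∀ Γ' : X.Prime, Γ' ≠ Γ →
        X.sigma (D - X.sigma D Γ • Finsupp.single Γ 1) Γ' = X.sigma D Γ') ∧
      (∀ m : ℝ, 0 < m →
        X.H0 (m • (D - X.sigma D Γ • Finsupp.single Γ 1)) = X.H0 (m • D)) := by
  classical
  set c : ℝ := X.sigma D Γ with hc
  set γ : X.Div := Finsupp.single Γ 1 with hγ
  set F : X.Div := D - c • γ with hF
  -- basic facts about γ
  have hγΓ : γ Γ = 1 := by simp [hγ]
  have hγne : ∀ Γ' : X.Prime, Γ' ≠ Γ → γ Γ' = 0 := by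
    intro Γ' h; simp [hγ, Finsupp.single_apply, Ne.symm h]
  have hγnonneg : ∀ Γ' : X.Prime, 0 ≤ γ Γ' := by
    intro Γ'
    by_cases h : Γ' = Γ
    · subst h; rw [hγΓ]; norm_num
    · rw [hγne Γ' h]
  -- the sets whose infima are the sigmas
  set S : X.Div → X.Prime → Set ℝ :=
    fun D' Γ' => {t : ℝ | ∃ E : X.Div, X.REquiv E D' ∧ 0 ≤ E ∧ t = E Γ'} with hS
  have hsigma : ∀ (D' : X.Div) (Γ' : X.Prime), X.sigma D' Γ' = sInf (S D' Γ') := fun _ _ => rfl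
  -- nonemptiness from bigness
  obtain ⟨E₀, hE₀r, hE₀p⟩ := exists_effective X n D hD
  have hSDne : ∀ Γ' : X.Prime, (S D Γ').Nonempty := fun Γ' => ⟨E₀ Γ', E₀, hE₀r, hE₀p, rfl⟩
  have hSlb : ∀ (D' : X.Div) (Γ' : X.Prime), ∀ t ∈ S D' Γ', (0:ℝ) ≤ t := by
    rintro D' Γ' t ⟨E, _, hEp, rfl⟩
    exact (Finsupp.le_def.mp hEp) Γ'
  have hSbdd : ∀ (D' : X.Div) (Γ' : X.Prime), BddBelow (S D' Γ') :=
    fun D' Γ' => ⟨0, hSlb D' Γ'⟩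
  -- c ≥ 0
  have hc0 : 0 ≤ c := by
    rw [hc, hsigma]
    exact le_csInf (hSDne Γ) (hSlb D Γ)
  -- key: any effective E ∼ D has E Γ ≥ c
  have hkey : ∀ E : X.Div, X.REquiv E D → 0 ≤ E → c ≤ E Γ := by
    intro E h1 h2
    rw [hc, hsigma]
    exact csInf_le (hSbdd D Γ) ⟨E, h1, h2, rfl⟩
  -- forward translation: Eff(D) → Eff(F)
  have hfwd : ∀ E : X.Div, X.REquiv E D → 0 ≤ E →
      X.REquiv (E - c • γ) F ∧ 0 ≤ E - c • γ := by
    intro E h1 h2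
    constructor
    · rw [NormalProperVariety.REquiv, hF, sub_sub_sub_cancel_right]
      exact h1
    · rw [Finsupp.le_def]
      intro Γ'
      rw [Finsupp.coe_zero, Pi.zero_apply, Finsupp.sub_apply, Finsupp.smul_apply, smul_eq_mul]
      by_cases h : Γ' = Γ
      · subst h
        rw [hγΓ, mul_one, sub_nonneg]
        exact hkey E h1 h2
      · rw [hγne Γ' h, mul_zero, sub_zero]
        exact (Finsupp.le_def.mp h2) Γ'
  -- backward translation: Eff(F) → Eff(D)
  have hbwd : ∀ E : X.Div, X.REquiv E F → 0 ≤ E →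
      X.REquiv (E + c • γ) D ∧ 0 ≤ E + c • γ := by
    intro E h1 h2
    constructor
    · rw [NormalProperVariety.REquiv]
      have heq : E + c • γ - D = E - F := by
        rw [hF]; ext Γ''
        simp only [Finsupp.sub_apply, Finsupp.add_apply, Finsupp.smul_apply, smul_eq_mul]
        ring
      rw [heq]
      exact h1
    · rw [Finsupp.le_def]
      intro Γ'
      rw [Finsupp.coe_zero, Pi.zero_apply, Finsupp.add_apply, Finsupp.smul_apply, smul_eq_mul]
      have hE := (Finsupp.le_def.mp h2) Γ'
      rw [Finsupp.coe_zero, Pi.zero_apply] at hE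
      have hg := hγnonneg Γ'
      nlinarith
  -- part 1 : sigma F Γ = 0
  have hSFne : (S F Γ).Nonempty := by
    obtain ⟨h1, h2⟩ := hfwd E₀ hE₀r hE₀p
    exact ⟨(E₀ - c • γ) Γ, _, h1, h2, rfl⟩
  have part1 : X.sigma F Γ = 0 := by
    rw [hsigma]
    refine le_antisymm ?_ (le_csInf hSFne (hSlb F Γ))
    by_contra hpos
    push_neg at hpos
    obtain ⟨t, ⟨E, hE1, hE2, rfl⟩, ht⟩ :=
      exists_lt_of_csInf_lt (hSDne Γ) (show sInf (S D Γ) < c + sInf (S F Γ) by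
        rw [← hsigma, ← hc]; linarith)
    obtain ⟨h1, h2⟩ := hfwd E hE1 hE2
    have hmem : (E - c • γ) Γ ∈ S F Γ := ⟨_, h1, h2, rfl⟩
    have hle := csInf_le (hSbdd F Γ) hmem
    have hval : (E - c • γ) Γ = E Γ - c := by
      rw [Finsupp.sub_apply, Finsupp.smul_apply, smul_eq_mul, hγΓ, mul_one]
    rw [hval] at hle
    linarith
  -- part 2 : sigma F Γ' = sigma D Γ' for Γ' ≠ Γ
  have part2 : ∀ Γ' : X.Prime, Γ' ≠ Γ → X.sigma F Γ' = X.sigma D Γ' := by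
    intro Γ' hne
    rw [hsigma, hsigma]
    congr 1
    ext t
    constructor
    · rintro ⟨E, h1, h2, rfl⟩
      obtain ⟨h1', h2'⟩ := hbwd E h1 h2
      refine ⟨E + c • γ, h1', h2', ?_⟩
      rw [Finsupp.add_apply, Finsupp.smul_apply, smul_eq_mul, hγne Γ' hne, mul_zero, add_zero]
    · rintro ⟨E, h1, h2, rfl⟩
      obtain ⟨h1', h2'⟩ := hfwd E h1 h2
      refine ⟨E - c • γ, h1', h2', ?_⟩
      rw [Finsupp.sub_apply, Finsupp.smul_apply, smul_eq_mul, hγne Γ' hne, mul_zero, sub_zero]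
  -- part 3 : H0 (m • F) = H0 (m • D)
  have part3 : ∀ m : ℝ, 0 < m → X.H0 (m • F) = X.H0 (m • D) := by
    intro m hm
    have hmF : ∀ Γ'' : X.Prime, (m • F) Γ'' = m * (D Γ'' - c * γ Γ'') := by
      intro Γ''
      rw [Finsupp.smul_apply, smul_eq_mul, hF, Finsupp.sub_apply, Finsupp.smul_apply, smul_eq_mul]
    have hmD : ∀ Γ'' : X.Prime, (m • D) Γ'' = m * D Γ'' := by
      intro Γ''; rw [Finsupp.smul_apply, smul_eq_mul]
    ext f
    simp only [NormalProperVariety.H0, Set.mem_setOf_eq]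
    constructor
    · rintro (rfl | hcond)
      · exact Or.inl rfl
      · refine Or.inr fun Γ'' => ?_
        have h' := hcond Γ''
        rw [hmF Γ''] at h'
        rw [hmD Γ'']
        nlinarith [hγnonneg Γ'', mul_nonneg (mul_nonneg hm.le hc0) (hγnonneg Γ'')]
    · rintro (rfl | hcond)
      · exact Or.inl rfl
      · by_cases hf : f = 0
        · exact Or.inl hf
        refine Or.inr fun Γ'' => ?_
        obtain ⟨h1, h2, happ⟩ := effective_of_section X D hm hf hcond
        have hge : c ≤ D Γ + m⁻¹ * (X.ord Γ f : ℝ) := by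
          rw [← happ Γ]; exact hkey _ h1 h2
        rw [hmF Γ'']
        by_cases h : Γ'' = Γ
        · subst h
          rw [hγΓ, mul_one]
          have hmi : 0 < m⁻¹ := inv_pos.mpr hm
          have hmul := mul_le_mul_of_nonneg_left hge hm.le
          have hh : m * (m⁻¹ * ((X.ord Γ'' f : ℤ) : ℝ)) = ((X.ord Γ'' f : ℤ) : ℝ) := by
            field_simp
          rw [mul_add, hh] at hmul
          nlinarith
        · rw [hγne Γ'' h, mul_zero, sub_zero]
          have h' := hcond Γ''
          rw [hmD Γ''] at h'
          exact h'
  exact ⟨part1, part2, part3⟩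
end

section
/- Let X be a normal proper variety and D a big ℝ-divisor. Then there are at most finitely many prime divisors Γ on X with σ_Γ(D) > 0. -/
/-- Let `X` be a normal proper variety and `D` a big ℝ-divisor.
Then there are at most finitely many prime divisors `Γ` with `σ_Γ(D) > 0`. -/
theorem finite_sigma_pos {k : Type} [Field k] (X : NormalProperVariety k) (n : ℕ)
    (D : X.Div) (hD : X.IsBig n D) :
    {Γ : X.Prime | 0 < X.sigma D Γ}.Finite := by
  -- Step 1: there exists m ≥ 1 and a nonzero f ∈ H⁰(mD).
  have hex : ∃ m : ℝ, 1 ≤ m ∧ ∃ f : X.K, f ≠ 0 ∧ f ∈ X.H0 (m • D) := by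
    by_contra hcon
    push_neg at hcon
    have hzero : ∀ m : ℝ, 1 ≤ m → X.h0 (m • D) = 0 := by
      intro m hm
      have hsub : X.H0 (m • D) ⊆ {0} := by
        intro f hf
        by_contra hne
        exact (hcon m hm f hne) hf
      have : Submodule.span k (X.H0 (m • D)) ≤ ⊥ := by
        rw [← Submodule.span_zero_singleton k]
        exact Submodule.span_mono hsub
      have hbot : Submodule.span k (X.H0 (m • D)) = ⊥ := le_bot_iff.mp this
      rw [NormalProperVariety.h0, Set.finrank, hbot]
      exact finrank_bot k X.K
    have heq : Filter.limsup
        (fun m : ℝ => (X.h0 (m • D) : ℝ) * (n.factorial : ℝ) / m ^ n)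
        Filter.atTop = 0 := by
      have hev : ∀ᶠ m : ℝ in Filter.atTop,
          (X.h0 (m • D) : ℝ) * (n.factorial : ℝ) / m ^ n = (fun _ : ℝ => (0:ℝ)) m := by
        filter_upwards [Filter.eventually_ge_atTop (1:ℝ)] with m hm
        simp [hzero m hm]
      rw [Filter.limsup_congr hev, Filter.limsup_const]
    have := hD
    rw [NormalProperVariety.IsBig, NormalProperVariety.vol, heq] at this
    exact lt_irrefl 0 this
  obtain ⟨m, hm, f, hf0, hfH⟩ := hex
  have hmpos : (0:ℝ) < m := lt_of_lt_of_le one_pos hm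
  -- the effective divisor D' ∼_ℝ D
  set D' : X.Div := D + m⁻¹ • X.divOf f with hD'
  have hdivOf : ∀ Γ, X.divOf f Γ = (X.ord Γ f : ℝ) := by
    intro Γ
    rw [NormalProperVariety.divOf, dif_neg hf0]
    rfl
  have hord : ∀ Γ : X.Prime, 0 ≤ (X.ord Γ f : ℝ) + (m • D) Γ := by
    rcases hfH with h | h
    · exact absurd h hf0
    · exact h
  have hD'nonneg : (0 : X.Div) ≤ D' := by
    rw [Finsupp.le_def]
    intro Γ
    have h1 : D' Γ = D Γ + m⁻¹ * (X.ord Γ f : ℝ) := by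
      simp [hD', hdivOf Γ]
    have h2 := hord Γ
    rw [Finsupp.smul_apply, smul_eq_mul] at h2
    have : 0 ≤ m⁻¹ * ((X.ord Γ f : ℝ) + m * D Γ) :=
      mul_nonneg (le_of_lt (inv_pos.mpr hmpos)) h2
    rw [mul_add, ← mul_assoc, inv_mul_cancel₀ (ne_of_gt hmpos), one_mul] at this
    simp only [Finsupp.coe_zero, Pi.zero_apply]
    linarith [h1 ▸ (by linarith : 0 ≤ D Γ + m⁻¹ * (X.ord Γ f : ℝ))]
  have hequiv : X.REquiv D' D := by
    rw [NormalProperVariety.REquiv]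
    have : D' - D = m⁻¹ • X.divOf f := by
      rw [hD']; abel
    rw [this]
    exact Submodule.smul_mem _ _ (Submodule.subset_span ⟨f, hf0, rfl⟩)
  -- σ_Γ(D) ≤ D' Γ for all Γ
  have hsigma_le : ∀ Γ, X.sigma D Γ ≤ D' Γ := by
    intro Γ
    apply csInf_le
    · refine ⟨0, ?_⟩
      rintro t ⟨E, _, hE, rfl⟩
      exact Finsupp.le_def.mp hE Γ
    · exact ⟨D', hequiv, hD'nonneg, rfl⟩
  -- conclude
  apply Set.Finite.subset D'.support.finite_toSet
  intro Γ hΓ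
  simp only [Set.mem_setOf_eq] at hΓ
  by_contra hns
  have : D' Γ = 0 := Finsupp.notMem_support_iff.mp (by simpa using hns)
  have := hsigma_le Γ
  linarith [hΓ, this, ‹D' Γ = 0›]
end

section
/- Let X be a normal proper variety, D a big ℝ-divisor with divisorial Zariski decomposition D = P_σ(D) + N_σ(D), where N_σ(D) = Σ_Γ σ_Γ(D)·Γ. Then P_σ(D) is big and movable (i.e., N_σ(P_σ(D)) = 0), and if D is effective then P_σ(D) is effective. -/
/-- Let `X` be a normal proper variety and `D` a big ℝ-divisor, with
divisorial Zariski decomposition `D = P_σ(D) + N_σ(D)`.  Then `P_σ(D)` is big and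
movable, and if `D` is effective then so is `P_σ(D)`. -/
theorem psigma_big_movable {k : Type} [Field k] (X : NormalProperVariety k) (n : ℕ)
    (D : X.Div) (hD : X.IsBig n D) :
    X.IsBig n (X.Psigma D) ∧ X.Movable (X.Psigma D) ∧
      (0 ≤ D → 0 ≤ X.Psigma D) := by
  classical
  -- the value of `divOf f` at a prime
  have hdiv_app : ∀ (f : X.K), f ≠ 0 → ∀ Γ, X.divOf f Γ = (X.ord Γ f : ℝ) := by
    intro f hf Γ
    rw [NormalProperVariety.divOf, dif_neg hf]
    rfl
  -- the defining set of `sigma`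
  have hsigma_eq : ∀ (E : X.Div) (Γ : X.Prime),
      X.sigma E Γ = sInf {t : ℝ | ∃ D' : X.Div, X.REquiv D' E ∧ 0 ≤ D' ∧ t = D' Γ} :=
    fun _ _ => rfl
  have hTbdd : ∀ (E : X.Div) (Γ : X.Prime),
      BddBelow {t : ℝ | ∃ D' : X.Div, X.REquiv D' E ∧ 0 ≤ D' ∧ t = D' Γ} := by
    intro E Γ
    refine ⟨0, ?_⟩
    rintro t ⟨D', -, hD', rfl⟩
    simpa using Finsupp.le_def.mp hD' Γ
  have hσ_le : ∀ (Γ : X.Prime) (D' : X.Div), X.REquiv D' D → 0 ≤ D' →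
      X.sigma D Γ ≤ D' Γ := by
    intro Γ D' h1 h2
    rw [hsigma_eq]
    exact csInf_le (hTbdd D Γ) ⟨D', h1, h2, rfl⟩
  -- construction of effective divisors from sections
  have hmkE : ∀ (m : ℝ), 0 < m → ∀ f : X.K, f ≠ 0 →
      (∀ Γ, 0 ≤ (X.ord Γ f : ℝ) + m * D Γ) →
      X.REquiv (D + m⁻¹ • X.divOf f) D ∧ (0 : X.Div) ≤ D + m⁻¹ • X.divOf f := by
    intro m hm f hf hord
    constructor
    · rw [NormalProperVariety.REquiv]
      have h1 : D + m⁻¹ • X.divOf f - D = m⁻¹ • X.divOf f := by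
        abel
      rw [h1]
      exact Submodule.smul_mem _ _ (Submodule.subset_span ⟨f, hf, rfl⟩)
    · rw [Finsupp.le_def]
      intro Γ
      have h1 := hord Γ
      have h2 : (0:ℝ) < m⁻¹ := inv_pos.mpr hm
      have h3 : m * m⁻¹ = 1 := mul_inv_cancel₀ hm.ne'
      have h4 : (D + m⁻¹ • X.divOf f) Γ = D Γ + m⁻¹ * (X.ord Γ f : ℝ) := by
        rw [Finsupp.add_apply, Finsupp.smul_apply, smul_eq_mul, hdiv_app f hf Γ]
      rw [Finsupp.coe_zero, Pi.zero_apply, h4]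
      have h5 : 0 ≤ m⁻¹ * ((X.ord Γ f : ℝ) + m * D Γ) := mul_nonneg h2.le h1
      rw [mul_add, ← mul_assoc, inv_mul_cancel₀ hm.ne', one_mul] at h5
      linarith
  -- From bigness, get one effective divisor R-equivalent to D
  have hex : ∃ m : ℝ, 1 ≤ m ∧ ∃ f ∈ X.H0 (m • D), f ≠ 0 := by
    by_contra h
    push_neg at h
    have hzero : ∀ m : ℝ, 1 ≤ m → X.h0 (m • D) = 0 := by
      intro m hm
      have hsub : X.H0 (m • D) ⊆ {0} := by
        intro f hf
        simpa using h m hm f hf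
      have hbot : Submodule.span k (X.H0 (m • D)) = ⊥ := by
        rw [Submodule.span_eq_bot]
        intro x hx
        simpa using hsub hx
      rw [NormalProperVariety.h0, Set.finrank, hbot]
      exact finrank_bot k X.K
    have hvol : X.vol n D = 0 := by
      rw [NormalProperVariety.vol]
      have hev : ∀ᶠ m : ℝ in Filter.atTop,
          (X.h0 (m • D) : ℝ) * (n.factorial : ℝ) / m ^ n = (0 : ℝ) := by
        filter_upwards [Filter.eventually_ge_atTop (1:ℝ)] with m hm
        rw [hzero m hm]
        simp
      rw [Filter.limsup_congr hev, Filter.limsup_const]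
    rw [NormalProperVariety.IsBig, hvol] at hD
    exact lt_irrefl 0 hD
  obtain ⟨m₀, hm₀, f₀, hf₀mem, hf₀⟩ := hex
  have hm₀pos : (0:ℝ) < m₀ := lt_of_lt_of_le one_pos hm₀
  have hordf₀ : ∀ Γ, 0 ≤ (X.ord Γ f₀ : ℝ) + m₀ * D Γ := by
    rcases hf₀mem with h0' | h'
    · exact absurd h0' hf₀
    · intro Γ
      have := h' Γ
      rwa [Finsupp.smul_apply, smul_eq_mul] at this
  set E₀ : X.Div := D + m₀⁻¹ • X.divOf f₀ with hE₀def
  obtain ⟨hE₀equiv, hE₀eff⟩ := hmkE m₀ hm₀pos f₀ hf₀ hordf₀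
  -- basic properties of sigma
  have hσ_nonneg : ∀ Γ, 0 ≤ X.sigma D Γ := by
    intro Γ
    rw [hsigma_eq]
    refine le_csInf ⟨E₀ Γ, E₀, hE₀equiv, hE₀eff, rfl⟩ ?_
    rintro t ⟨D', -, h2, rfl⟩
    simpa using Finsupp.le_def.mp h2 Γ
  have hsuppfin : (Function.support fun Γ => X.sigma D Γ).Finite := by
    apply Set.Finite.subset E₀.support.finite_toSet
    intro Γ hΓ
    simp only [Function.mem_support] at hΓ
    by_contra hnot
    have hz : E₀ Γ = 0 := Finsupp.notMem_support_iff.mp (by simpa using hnot)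
    have h1 := hσ_le Γ E₀ hE₀equiv hE₀eff
    rw [hz] at h1
    exact hΓ (le_antisymm h1 (hσ_nonneg Γ))
  have hN : ∀ Γ, X.Nsigma D Γ = X.sigma D Γ := by
    intro Γ
    rw [NormalProperVariety.Nsigma, dif_pos hsuppfin]
    rfl
  have hPapp : ∀ Γ, X.Psigma D Γ = D Γ - X.sigma D Γ := by
    intro Γ
    rw [NormalProperVariety.Psigma, Finsupp.sub_apply, hN Γ]
  -- translating effective divisors equivalent to D into ones equivalent to P and back
  have hback : ∀ E : X.Div, X.REquiv E D → 0 ≤ E →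
      X.REquiv (E - X.Nsigma D) (X.Psigma D) ∧ (0:X.Div) ≤ E - X.Nsigma D := by
    intro E h1 h2
    constructor
    · rw [NormalProperVariety.REquiv]
      have heq : E - X.Nsigma D - X.Psigma D = E - D := by
        rw [NormalProperVariety.Psigma]; abel
      rw [heq]
      exact h1
    · rw [Finsupp.le_def]
      intro Γ
      have h3 := hσ_le Γ E h1 h2
      rw [Finsupp.coe_zero, Pi.zero_apply, Finsupp.sub_apply, hN Γ]
      linarith
  -- sigma of the positive part vanishes
  have hσP : ∀ Γ, X.sigma (X.Psigma D) Γ = 0 := by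
    intro Γ
    obtain ⟨hEq₀, hEff₀⟩ := hback E₀ hE₀equiv hE₀eff
    apply le_antisymm
    · have key : X.sigma (X.Psigma D) Γ + X.Nsigma D Γ ≤ X.sigma D Γ := by
        rw [hsigma_eq D Γ]
        refine le_csInf ⟨E₀ Γ, E₀, hE₀equiv, hE₀eff, rfl⟩ ?_
        rintro t ⟨E, h1, h2, rfl⟩
        obtain ⟨h3, h4⟩ := hback E h1 h2
        have h5 : X.sigma (X.Psigma D) Γ ≤ (E - X.Nsigma D) Γ := by
          rw [hsigma_eq]
          exact csInf_le (hTbdd _ Γ) ⟨E - X.Nsigma D, h3, h4, rfl⟩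
        rw [Finsupp.sub_apply] at h5
        linarith
      have h6 := hσ_nonneg Γ
      rw [hN Γ] at key
      linarith
    · rw [hsigma_eq]
      refine le_csInf ⟨(E₀ - X.Nsigma D) Γ, E₀ - X.Nsigma D, hEq₀, hEff₀, rfl⟩ ?_
      rintro t ⟨P', -, h2, rfl⟩
      simpa using Finsupp.le_def.mp h2 Γ
  -- movability
  have hmov : X.Movable (X.Psigma D) := by
    rw [NormalProperVariety.Movable, NormalProperVariety.Nsigma]
    have hfin : (Function.support fun Γ => X.sigma (X.Psigma D) Γ).Finite := by
      have : (Function.support fun Γ => X.sigma (X.Psigma D) Γ) = ∅ := by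
        ext Γ
        simp [Function.mem_support, hσP Γ]
      rw [this]
      exact Set.finite_empty
    rw [dif_pos hfin]
    ext Γ
    show X.sigma (X.Psigma D) Γ = 0
    exact hσP Γ
  -- sections of mP and mD coincide
  have hH0 : ∀ m : ℝ, 0 < m → X.H0 (m • X.Psigma D) = X.H0 (m • D) := by
    intro m hm
    ext f
    by_cases hf : f = 0
    · simp [NormalProperVariety.H0, hf]
    constructor
    · rintro (h | h)
      · exact absurd h hf
      right
      intro Γ
      have h1 := h Γ
      rw [Finsupp.smul_apply, smul_eq_mul, hPapp Γ] at h1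
      have h2 := mul_nonneg hm.le (hσ_nonneg Γ)
      rw [Finsupp.smul_apply, smul_eq_mul]
      nlinarith
    · rintro (h | h)
      · exact absurd h hf
      right
      intro Γ
      have hord : ∀ Γ', 0 ≤ (X.ord Γ' f : ℝ) + m * D Γ' := by
        intro Γ'
        have := h Γ'
        rwa [Finsupp.smul_apply, smul_eq_mul] at this
      obtain ⟨hEq, hEff⟩ := hmkE m hm f hf hord
      have h3 := hσ_le Γ _ hEq hEff
      have h4 : (D + m⁻¹ • X.divOf f) Γ = D Γ + m⁻¹ * (X.ord Γ f : ℝ) := by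
        rw [Finsupp.add_apply, Finsupp.smul_apply, smul_eq_mul, hdiv_app f hf Γ]
      rw [h4] at h3
      rw [Finsupp.smul_apply, smul_eq_mul, hPapp Γ]
      have h6 := mul_le_mul_of_nonneg_left h3 hm.le
      rw [mul_add, ← mul_assoc, mul_inv_cancel₀ hm.ne', one_mul] at h6
      rw [mul_sub]
      linarith
  -- bigness
  have hbig : X.IsBig n (X.Psigma D) := by
    rw [NormalProperVariety.IsBig]
    have hvol : X.vol n (X.Psigma D) = X.vol n D := by
      rw [NormalProperVariety.vol, NormalProperVariety.vol]
      apply Filter.limsup_congr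
      filter_upwards [Filter.eventually_ge_atTop (1:ℝ)] with m hm
      have : X.h0 (m • X.Psigma D) = X.h0 (m • D) := by
        rw [NormalProperVariety.h0, NormalProperVariety.h0, hH0 m (by linarith)]
      rw [this]
    rw [hvol]
    exact hD
  refine ⟨hbig, hmov, ?_⟩
  intro hDeff
  rw [Finsupp.le_def]
  intro Γ
  have h1 : X.REquiv D D := by
    rw [NormalProperVariety.REquiv, sub_self]
    exact Submodule.zero_mem _
  have h2 := hσ_le Γ D h1 hDeff
  rw [Finsupp.coe_zero, Pi.zero_apply, hPapp Γ]
  linarith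
end

section
/- Let X be a normal proper variety and let P, D be big ℝ-divisors with P movable and P ≤ D (i.e., D − P effective). Then P ≤ P_σ(D). -/
namespace NormalProperVariety

variable {k : Type} [Field k] (X : NormalProperVariety k)

/-- The set appearing in the definition of `σ_Γ`. -/
def sigmaSet (D : X.Div) (Γ : X.Prime) : Set ℝ :=
  {t : ℝ | ∃ D' : X.Div, X.REquiv D' D ∧ 0 ≤ D' ∧ t = D' Γ}

lemma sigma_eq (D : X.Div) (Γ : X.Prime) : X.sigma D Γ = sInf (X.sigmaSet D Γ) := rfl

lemma sigmaSet_bddBelow (D : X.Div) (Γ : X.Prime) : BddBelow (X.sigmaSet D Γ) := by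
  refine ⟨0, ?_⟩
  rintro t ⟨D', -, hD', rfl⟩
  exact (Finsupp.le_def.mp hD') Γ

lemma divOf_apply {f : X.K} (hf : f ≠ 0) (Γ : X.Prime) :
    X.divOf f Γ = (X.ord Γ f : ℝ) := by
  rw [divOf, dif_neg hf]; rfl

lemma exists_effective {n : ℕ} {D : X.Div} (hD : X.IsBig n D) :
    ∃ D' : X.Div, X.REquiv D' D ∧ 0 ≤ D' := by
  by_contra h
  push_neg at h
  have h0zero : ∀ m : ℝ, 1 ≤ m → X.h0 (m • D) = 0 := by
    intro m hm
    have hm0 : (0:ℝ) < m := lt_of_lt_of_le one_pos hm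
    have hsub : X.H0 (m • D) ⊆ {0} := by
      intro f hf
      by_contra hf0
      simp only [Set.mem_singleton_iff] at hf0
      rcases hf with rfl | hord
      · exact hf0 rfl
      set D' : X.Div := D + m⁻¹ • X.divOf f with hD'
      have hequiv : X.REquiv D' D := by
        have : D' - D = m⁻¹ • X.divOf f := by rw [hD']; abel
        rw [REquiv, this]
        exact Submodule.smul_mem _ _ (Submodule.subset_span ⟨f, hf0, rfl⟩)
      have heff : (0 : X.Div) ≤ D' := by
        rw [Finsupp.le_def]
        intro Γ
        have h1 := hord Γ
        have h2 : D' Γ = D Γ + m⁻¹ * (X.ord Γ f : ℝ) := by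
          simp [hD', X.divOf_apply hf0]
        have h3 : (m • D) Γ = m * D Γ := by simp
        rw [h3] at h1
        have : D Γ + m⁻¹ * (X.ord Γ f : ℝ) = m⁻¹ * ((X.ord Γ f : ℝ) + m * D Γ) := by
          field_simp; ring
        rw [Finsupp.coe_zero, Pi.zero_apply, h2, this]
        positivity
      exact h D' hequiv heff
    have hspan : Submodule.span k (X.H0 (m • D)) = ⊥ :=
      le_bot_iff.mp ((Submodule.span_mono hsub).trans_eq (Submodule.span_zero_singleton k))
    rw [h0, Set.finrank, hspan, finrank_bot]
  have hvol : X.vol n D = 0 := by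
    rw [vol]
    have hev : ∀ᶠ m : ℝ in Filter.atTop,
        (X.h0 (m • D) : ℝ) * (n.factorial : ℝ) / m ^ n = 0 := by
      filter_upwards [Filter.eventually_ge_atTop (1:ℝ)] with m hm
      rw [h0zero m hm]
      simp
    rw [Filter.limsup_congr hev, Filter.limsup_const]
  rw [IsBig, hvol] at hD
  exact lt_irrefl 0 hD

lemma sigmaSet_nonempty {n : ℕ} {D : X.Div} (hD : X.IsBig n D) (Γ : X.Prime) :
    (X.sigmaSet D Γ).Nonempty := by
  obtain ⟨D', h1, h2⟩ := X.exists_effective hD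
  exact ⟨D' Γ, D', h1, h2, rfl⟩

lemma sigma_nonneg {n : ℕ} {D : X.Div} (hD : X.IsBig n D) (Γ : X.Prime) :
    0 ≤ X.sigma D Γ := by
  rw [sigma_eq]
  refine le_csInf (X.sigmaSet_nonempty hD Γ) ?_
  rintro t ⟨D', -, hD', rfl⟩
  exact (Finsupp.le_def.mp hD') Γ

lemma sigma_le {D D' : X.Div} (h1 : X.REquiv D' D) (h2 : 0 ≤ D') (Γ : X.Prime) :
    X.sigma D Γ ≤ D' Γ :=
  csInf_le (X.sigmaSet_bddBelow D Γ) ⟨D', h1, h2, rfl⟩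

lemma sigma_subadd {n : ℕ} {P D : X.Div} (hP : X.IsBig n P) (hle : P ≤ D) (Γ : X.Prime) :
    X.sigma D Γ ≤ X.sigma P Γ + (D - P) Γ := by
  have key : ∀ t ∈ X.sigmaSet P Γ, X.sigma D Γ - (D - P) Γ ≤ t := by
    rintro t ⟨P', hPP, hP', rfl⟩
    have hequiv : X.REquiv (P' + (D - P)) D := by
      have : (P' + (D - P)) - D = P' - P := by abel
      rw [REquiv, this]
      exact hPP
    have heff : (0 : X.Div) ≤ P' + (D - P) := by
      rw [Finsupp.le_def]
      intro γ
      have := (Finsupp.le_def.mp hP') γ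
      have h2 := (Finsupp.le_def.mp hle) γ
      simp only [Finsupp.coe_zero, Pi.zero_apply, Finsupp.coe_add, Finsupp.coe_sub,
        Pi.add_apply, Pi.sub_apply] at *
      linarith
    have := X.sigma_le hequiv heff Γ
    simp only [Finsupp.coe_add, Finsupp.coe_sub, Pi.add_apply, Pi.sub_apply] at this ⊢
    linarith
  have := le_csInf (X.sigmaSet_nonempty hP Γ) key
  exact sub_le_iff_le_add.mp this

lemma sigma_support_finite {n : ℕ} {D : X.Div} (hD : X.IsBig n D) :
    (Function.support fun Γ => X.sigma D Γ).Finite := by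
  obtain ⟨D', h1, h2⟩ := X.exists_effective hD
  refine Set.Finite.subset D'.finite_support ?_
  intro Γ hΓ
  simp only [Function.mem_support, ne_eq] at hΓ
  simp only [Finsupp.fun_support_eq, Finset.mem_coe, Finsupp.mem_support_iff]
  intro hzero
  apply hΓ
  have hub := X.sigma_le h1 h2 Γ
  have hlb := X.sigma_nonneg hD Γ
  rw [hzero] at hub
  linarith

lemma nsigma_apply {n : ℕ} {D : X.Div} (hD : X.IsBig n D) (Γ : X.Prime) :
    X.Nsigma D Γ = X.sigma D Γ := by
  rw [Nsigma, dif_pos (X.sigma_support_finite hD)]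
  rfl

lemma sigma_eq_zero_of_movable {n : ℕ} {P : X.Div} (hP : X.IsBig n P)
    (hmov : X.Movable P) (Γ : X.Prime) : X.sigma P Γ = 0 := by
  have := X.nsigma_apply hP Γ
  rw [hmov] at this
  simpa using this.symm

end NormalProperVariety

/-- Let `X` be a normal proper variety and `P ≤ D` big ℝ-divisors
with `P` movable.  Then `P ≤ P_σ(D)`. -/
theorem movable_le_psigma {k : Type} [Field k] (X : NormalProperVariety k) (n : ℕ)
    (P D : X.Div) (hP : X.IsBig n P) (hD : X.IsBig n D)
    (hmov : X.Movable P) (hle : P ≤ D) :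
    P ≤ X.Psigma D := by
  have hsub := fun Γ => X.sigma_subadd hP hle Γ
  have hzero := fun Γ => X.sigma_eq_zero_of_movable hP hmov Γ
  rw [Finsupp.le_def]
  intro Γ
  have h1 := hsub Γ
  rw [hzero Γ, zero_add] at h1
  rw [NormalProperVariety.Psigma]
  have h2 := X.nsigma_apply hD Γ
  simp only [Finsupp.coe_sub, Pi.sub_apply] at h1 ⊢
  rw [h2]
  linarith
end

section
/- Let S → ℙ¹ be a minimal ruled surface with a negative section E and a positive section C disjoint from E, and let F₁, F₂, F₃, F₄ be distinct fibers. Then C ∼_ℝ C + (F₁ − F₂) + √2·(F₃ − F₄), and for every real m > 0, h^0(S, O_S(⌊mC + m(F₁−F₂) + m√2(F₃−F₄)⌋)) < h^0(S, O_S(mC)). -/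
namespace NormalProperVariety

variable {k : Type} [Field k] (X : NormalProperVariety k)

lemma ord_one (Γ : X.Prime) : X.ord Γ 1 = 0 := by
  have := X.ord_const Γ 1 one_ne_zero
  simpa using this

lemma divOf_one : X.divOf (1 : X.K) = 0 := by
  ext Γ
  rw [divOf_apply X one_ne_zero, ord_one]
  simp

lemma divOf_mul {f g : X.K} (hf : f ≠ 0) (hg : g ≠ 0) :
    X.divOf (f * g) = X.divOf f + X.divOf g := by
  ext Γ
  rw [Finsupp.add_apply, divOf_apply X (mul_ne_zero hf hg), divOf_apply X hf,
    divOf_apply X hg, X.ord_mul Γ hf hg]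
  push_cast; ring

lemma divOf_pow {f : X.K} (hf : f ≠ 0) (n : ℕ) :
    X.divOf (f ^ n) = (n : ℝ) • X.divOf f := by
  induction n with
  | zero => simp [divOf_one]
  | succ n ih =>
      rw [pow_succ, divOf_mul X (pow_ne_zero _ hf) hf, ih]
      push_cast
      rw [add_smul, one_smul]

/-- `H⁰(D)` as a `k`-submodule of the function field. -/
noncomputable def H0mod (D : X.Div) : Submodule k X.K where
  carrier := X.H0 D
  zero_mem' := Or.inl rfl
  add_mem' := by
    rintro f g hf hg
    by_cases hf0 : f = 0
    · subst hf0; simpa using hg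
    by_cases hg0 : g = 0
    · subst hg0; simpa using hf
    rcases hf with rfl | hf
    · exact absurd rfl hf0
    rcases hg with rfl | hg
    · exact absurd rfl hg0
    by_cases hfg : f + g = 0
    · exact Or.inl hfg
    refine Or.inr fun Γ => ?_
    have hmin := X.ord_add Γ hf0 hg0 hfg
    have h1 := hf Γ
    have h2 := hg Γ
    rcases le_total (X.ord Γ f) (X.ord Γ g) with h | h
    · rw [min_eq_left h] at hmin
      have : (X.ord Γ f : ℝ) ≤ (X.ord Γ (f + g) : ℝ) := by exact_mod_cast hmin
      linarith
    · rw [min_eq_right h] at hmin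
      have : (X.ord Γ g : ℝ) ≤ (X.ord Γ (f + g) : ℝ) := by exact_mod_cast hmin
      linarith
  smul_mem' := by
    rintro r f hf
    by_cases hf0 : f = 0
    · subst hf0; rw [smul_zero]; exact Or.inl rfl
    by_cases hr : r = 0
    · rw [hr, zero_smul]; exact Or.inl rfl
    rcases hf with rfl | hf
    · exact absurd rfl hf0
    refine Or.inr fun Γ => ?_
    have halg : algebraMap k X.K r ≠ 0 := by
      simpa using hr
    have : r • f = algebraMap k X.K r * f := Algebra.smul_def r f
    rw [this, X.ord_mul Γ halg hf0, X.ord_const Γ r hr]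
    simpa using hf Γ

lemma span_H0 (D : X.Div) : Submodule.span k (X.H0 D) = X.H0mod D :=
  Submodule.span_eq (X.H0mod D)

lemma h0_eq (D : X.Div) : X.h0 D = Module.finrank k (X.H0mod D) := by
  rw [h0, Set.finrank, span_H0]

/-- Multiplication by a nonzero `w` as a `k`-linear automorphism of `K`. -/
noncomputable def mulRightEquiv (w : X.K) (hw : w ≠ 0) : X.K ≃ₗ[k] X.K where
  toFun f := f * w
  invFun f := f * w⁻¹
  map_add' := by intros; ring
  map_smul' := by intros; simp [smul_mul_assoc]
  left_inv f := by field_simp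
  right_inv f := by field_simp

lemma mem_H0_mul_iff {w : X.K} (hw : w ≠ 0) (D : X.Div) (f : X.K) :
    f * w ∈ X.H0 (D - X.divOf w) ↔ f ∈ X.H0 D := by
  by_cases hf0 : f = 0
  · subst hf0; simp [H0]
  constructor
  · rintro (h | h)
    · exact absurd h (mul_ne_zero hf0 hw)
    refine Or.inr fun Γ => ?_
    have := h Γ
    rw [X.ord_mul Γ hf0 hw, Finsupp.sub_apply, divOf_apply X hw] at this
    push_cast at this ⊢
    linarith
  · rintro (h | h)
    · exact absurd h hf0
    refine Or.inr fun Γ => ?_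
    have := h Γ
    rw [X.ord_mul Γ hf0 hw, Finsupp.sub_apply, divOf_apply X hw]
    push_cast
    linarith

lemma image_H0_mul {w : X.K} (hw : w ≠ 0) (D : X.Div) :
    (X.mulRightEquiv w hw) '' (X.H0 D) = X.H0 (D - X.divOf w) := by
  ext f
  constructor
  · rintro ⟨g, hg, rfl⟩
    exact (X.mem_H0_mul_iff hw D g).mpr hg
  · intro hf
    refine ⟨f * w⁻¹, ?_, ?_⟩
    · have : f * w⁻¹ * w = f := by field_simp
      rw [← this] at hf
      exact (X.mem_H0_mul_iff hw D _).mp hf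
    · show f * w⁻¹ * w = f
      field_simp

lemma h0_sub_divOf {w : X.K} (hw : w ≠ 0) (D : X.Div) :
    X.h0 (D - X.divOf w) = X.h0 D := by
  rw [h0, h0, Set.finrank, Set.finrank, ← X.image_H0_mul hw D]
  have h : (⇑(X.mulRightEquiv w hw) '' X.H0 D)
      = ⇑(X.mulRightEquiv w hw).toLinearMap '' X.H0 D := rfl
  rw [h, Submodule.span_image]
  exact LinearEquiv.finrank_map_eq (X.mulRightEquiv w hw) _

end NormalProperVariety

/-- Let `S → ℙ¹` be a minimal ruled surface over an algebraically
closed field, with a negative section `e`, a positive section `c` disjoint from `e`,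
and distinct fibers `f₁, f₂, f₃, f₄`.  (The geometric situation is encoded through an
intersection pairing `inter` on ℝ-divisors that is invariant under linear
equivalence, together with the standard intersection numbers: `E² < 0`, `C² > 0`,
`C·E = 0`, `F·E = F·C = 1`, `F·F' = 0` for fibers, and the fact that any two fibers
are linearly equivalent.)  Then `C ∼_ℝ C + (F₁ - F₂) + √2·(F₃ - F₄)`, yet
`h⁰(⌊mC + m(F₁ - F₂) + m√2(F₃ - F₄)⌋) < h⁰(mC)` for every real `m > 0`. -/
theorem ruled_surface_hilbert_function {k : Type} [Field k] [IsAlgClosed k]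
    (S : NormalProperVariety k)
    (hfin : ∀ D' : S.Div, FiniteDimensional k (Submodule.span k (S.H0 D')))
    (e c f₁ f₂ f₃ f₄ : S.Prime)
    (hdist : List.Pairwise (· ≠ ·) [e, c, f₁, f₂, f₃, f₄])
    (inter : S.Div →ₗ[ℝ] S.Div →ₗ[ℝ] ℝ)
    (hinv : ∀ D D' : S.Div, S.ZEquiv D D' → ∀ G : S.Div, inter D G = inter D' G)
    (hEneg : inter (Finsupp.single e 1) (Finsupp.single e 1) < 0)
    (hCpos : 0 < inter (Finsupp.single c 1) (Finsupp.single c 1))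
    (hdisj : inter (Finsupp.single c 1) (Finsupp.single e 1) = 0)
    (hfibE : ∀ f ∈ [f₁, f₂, f₃, f₄], inter (Finsupp.single f 1) (Finsupp.single e 1) = 1)
    (hfibC : ∀ f ∈ [f₁, f₂, f₃, f₄], inter (Finsupp.single f 1) (Finsupp.single c 1) = 1)
    (hfibfib : ∀ f ∈ [f₁, f₂, f₃, f₄], ∀ f' ∈ [f₁, f₂, f₃, f₄],
      inter (Finsupp.single f 1) (Finsupp.single f' 1) = 0)
    (hfiblin : ∀ f ∈ [f₁, f₂, f₃, f₄], ∀ f' ∈ [f₁, f₂, f₃, f₄],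
      S.ZEquiv (Finsupp.single f 1) (Finsupp.single f' 1)) :
    S.REquiv (Finsupp.single c 1)
      (Finsupp.single c 1 + (Finsupp.single f₁ 1 - Finsupp.single f₂ 1)
        + Real.sqrt 2 • (Finsupp.single f₃ 1 - Finsupp.single f₄ 1)) ∧
    ∀ m : ℝ, 0 < m →
      S.h0 (m • Finsupp.single c 1 + m • (Finsupp.single f₁ 1 - Finsupp.single f₂ 1)
          + (m * Real.sqrt 2) • (Finsupp.single f₃ 1 - Finsupp.single f₄ 1))
        < S.h0 (m • Finsupp.single c 1) := by
  classical
  obtain ⟨hne, hdist'⟩ := List.pairwise_cons.mp hdist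
  obtain ⟨hcne, hdist''⟩ := List.pairwise_cons.mp hdist'
  have hcf₁ : c ≠ f₁ := hcne f₁ (by simp)
  have hcf₂ : c ≠ f₂ := hcne f₂ (by simp)
  have hcf₃ : c ≠ f₃ := hcne f₃ (by simp)
  have hcf₄ : c ≠ f₄ := hcne f₄ (by simp)
  obtain ⟨h1ne, hdist₃⟩ := List.pairwise_cons.mp hdist''
  have h12 : f₁ ≠ f₂ := h1ne f₂ (by simp)
  have h13 : f₁ ≠ f₃ := h1ne f₃ (by simp)
  have h14 : f₁ ≠ f₄ := h1ne f₄ (by simp)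
  obtain ⟨h2ne, hdist₄⟩ := List.pairwise_cons.mp hdist₃
  have h23 : f₂ ≠ f₃ := h2ne f₃ (by simp)
  have h24 : f₂ ≠ f₄ := h2ne f₄ (by simp)
  obtain ⟨h3ne, _⟩ := List.pairwise_cons.mp hdist₄
  have h34 : f₃ ≠ f₄ := h3ne f₄ (by simp)
  obtain ⟨g, hg0, hgdiv⟩ := hfiblin f₁ (by simp) f₂ (by simp)
  obtain ⟨h, hh0, hhdiv⟩ := hfiblin f₃ (by simp) f₄ (by simp)
  constructor
  · have e1 : (Finsupp.single c 1 : S.Div)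
        - (Finsupp.single c 1 + (Finsupp.single f₁ 1 - Finsupp.single f₂ 1)
          + Real.sqrt 2 • (Finsupp.single f₃ 1 - Finsupp.single f₄ 1))
        = (-1 : ℝ) • S.divOf g + (-Real.sqrt 2) • S.divOf h := by
      rw [← hgdiv, ← hhdiv]
      module
    rw [NormalProperVariety.REquiv, e1]
    exact Submodule.add_mem _
      (Submodule.smul_mem _ _ (Submodule.subset_span ⟨g, hg0, rfl⟩))
      (Submodule.smul_mem _ _ (Submodule.subset_span ⟨h, hh0, rfl⟩))
  · intro m hm
    have hs2 : (0:ℝ) < Real.sqrt 2 := by positivity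
    have hm2 : 0 < m * Real.sqrt 2 := by positivity
    set α : ℝ := (⌊m⌋ : ℝ) with hαdef
    set β : ℝ := (⌊m * Real.sqrt 2⌋ : ℝ) with hβdef
    have hαle : α ≤ m := Int.floor_le m
    have hαlt : m < α + 1 := Int.lt_floor_add_one m
    have hβle : β ≤ m * Real.sqrt 2 := Int.floor_le _
    have hβlt : m * Real.sqrt 2 < β + 1 := Int.lt_floor_add_one _
    have hα0 : (0:ℤ) ≤ ⌊m⌋ := Int.floor_nonneg.mpr hm.le
    have hβ0 : (0:ℤ) ≤ ⌊m * Real.sqrt 2⌋ := Int.floor_nonneg.mpr hm2.le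
    set a : ℕ := ⌊m⌋.toNat with hadef
    set b : ℕ := ⌊m * Real.sqrt 2⌋.toNat with hbdef
    have ha : (a : ℝ) = α := by
      rw [hαdef, hadef]
      exact_mod_cast congrArg (fun n : ℤ => (n : ℝ)) (Int.toNat_of_nonneg hα0)
    have hb : (b : ℝ) = β := by
      rw [hβdef, hbdef]
      exact_mod_cast congrArg (fun n : ℤ => (n : ℝ)) (Int.toNat_of_nonneg hβ0)
    set w : S.K := g ^ a * h ^ b with hwdef
    have hw0 : w ≠ 0 := mul_ne_zero (pow_ne_zero _ hg0) (pow_ne_zero _ hh0)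
    have hdivw : S.divOf w
        = α • (Finsupp.single f₁ 1 - Finsupp.single f₂ 1)
          + β • (Finsupp.single f₃ 1 - Finsupp.single f₄ 1) := by
      rw [hwdef, S.divOf_mul (pow_ne_zero _ hg0) (pow_ne_zero _ hh0),
        S.divOf_pow hg0, S.divOf_pow hh0, ← hgdiv, ← hhdiv, ha, hb]
    set D : S.Div := m • Finsupp.single c 1
        + m • (Finsupp.single f₁ 1 - Finsupp.single f₂ 1)
        + (m * Real.sqrt 2) • (Finsupp.single f₃ 1 - Finsupp.single f₄ 1) with hDdef
    set E : S.Div := D - S.divOf w with hEdef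
    have hEval : ∀ Γ, E Γ = m * (if c = Γ then (1:ℝ) else 0)
        + (m - α) * (if f₁ = Γ then (1:ℝ) else 0) + (α - m) * (if f₂ = Γ then (1:ℝ) else 0)
        + (m * Real.sqrt 2 - β) * (if f₃ = Γ then (1:ℝ) else 0)
        + (β - m * Real.sqrt 2) * (if f₄ = Γ then (1:ℝ) else 0) := by
      intro Γ
      rw [hEdef, hDdef, hdivw]
      simp only [Finsupp.coe_sub, Finsupp.coe_add, Finsupp.coe_smul, Pi.sub_apply,
        Pi.add_apply, Pi.smul_apply, smul_eq_mul, Finsupp.single_apply]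
      ring
    have intpos : ∀ n : ℤ, (-1 : ℝ) < (n : ℝ) → (0:ℝ) ≤ (n : ℝ) := by
      intro n hn
      have h1 : (-1 : ℤ) < n := by exact_mod_cast hn
      have h2 : (0 : ℤ) ≤ n := by omega
      exact_mod_cast h2
    have hmC : ∀ Γ, (m • Finsupp.single c 1 : S.Div) Γ = m * (if c = Γ then (1:ℝ) else 0) := by
      intro Γ
      rw [Finsupp.smul_apply, Finsupp.single_apply, smul_eq_mul]
    rw [← S.h0_sub_divOf hw0 D, ← hEdef, S.h0_eq, S.h0_eq]
    have hFD : FiniteDimensional k (S.H0mod (m • Finsupp.single c 1)) := by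
      rw [← NormalProperVariety.span_H0]
      exact hfin _
    refine Submodule.finrank_lt_finrank_of_lt ?_
    rw [SetLike.lt_iff_le_and_exists]
    constructor
    · -- H0(E) ⊆ H0(mC)
      intro f hf
      rcases (hf : f ∈ S.H0 E) with rfl | hf
      · exact Or.inl rfl
      refine Or.inr fun Γ => ?_
      have hfΓ := hf Γ
      rw [hEval Γ] at hfΓ
      rw [hmC Γ]
      by_cases hc : c = Γ
      · have n1 : ¬(f₁ = Γ) := fun hh => hcf₁ (hc.trans hh.symm)
        have n2 : ¬(f₂ = Γ) := fun hh => hcf₂ (hc.trans hh.symm)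
        have n3 : ¬(f₃ = Γ) := fun hh => hcf₃ (hc.trans hh.symm)
        have n4 : ¬(f₄ = Γ) := fun hh => hcf₄ (hc.trans hh.symm)
        rw [if_pos hc] at hfΓ ⊢
        rw [if_neg n1, if_neg n2, if_neg n3, if_neg n4] at hfΓ
        linarith
      rw [if_neg hc] at hfΓ ⊢
      by_cases h1 : f₁ = Γ
      · have n2 : ¬(f₂ = Γ) := fun hh => h12 (h1.trans hh.symm)
        have n3 : ¬(f₃ = Γ) := fun hh => h13 (h1.trans hh.symm)
        have n4 : ¬(f₄ = Γ) := fun hh => h14 (h1.trans hh.symm)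
        rw [if_pos h1, if_neg n2, if_neg n3, if_neg n4] at hfΓ
        have hpos := intpos (S.ord Γ f) (by linarith)
        linarith
      rw [if_neg h1] at hfΓ
      by_cases h2 : f₂ = Γ
      · have n3 : ¬(f₃ = Γ) := fun hh => h23 (h2.trans hh.symm)
        have n4 : ¬(f₄ = Γ) := fun hh => h24 (h2.trans hh.symm)
        rw [if_pos h2, if_neg n3, if_neg n4] at hfΓ
        linarith
      rw [if_neg h2] at hfΓ
      by_cases h3 : f₃ = Γ
      · have n4 : ¬(f₄ = Γ) := fun hh => h34 (h3.trans hh.symm)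
        rw [if_pos h3, if_neg n4] at hfΓ
        have hpos := intpos (S.ord Γ f) (by linarith)
        linarith
      rw [if_neg h3] at hfΓ
      by_cases h4 : f₄ = Γ
      · rw [if_pos h4] at hfΓ
        linarith
      · rw [if_neg h4] at hfΓ
        linarith
    · -- 1 ∈ H0(mC) but 1 ∉ H0(E)
      refine ⟨1, ?_, ?_⟩
      · refine Or.inr fun Γ => ?_
        rw [S.ord_one, hmC Γ]
        by_cases hΓ : c = Γ
        · rw [if_pos hΓ]
          simp
          linarith
        · rw [if_neg hΓ]
          simp
      · intro hmem
        rcases (hmem : (1 : S.K) ∈ S.H0 E) with h1 | h1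
        · exact one_ne_zero h1
        have h2 := h1 f₂
        have h4 := h1 f₄
        rw [S.ord_one, hEval f₂, if_neg hcf₂, if_neg h12, if_pos rfl,
          if_neg (Ne.symm h23), if_neg (Ne.symm h24)] at h2
        rw [S.ord_one, hEval f₄, if_neg hcf₄, if_neg h14, if_neg h24,
          if_neg h34, if_pos rfl] at h4
        push_cast at h2 h4
        have hmα : m = α := le_antisymm (by linarith) hαle
        have hmβ : m * Real.sqrt 2 = β := le_antisymm (by linarith) hβle
        have hfl0 : ⌊m⌋ ≠ 0 := by
          intro h0
          rw [hαdef, h0] at hmα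
          simp at hmα
          exact absurd hmα (ne_of_gt hm)
        have hirr : Irrational ((⌊m⌋ : ℤ) * Real.sqrt 2) :=
          irrational_sqrt_two.intCast_mul hfl0
        have hm' : ((⌊m⌋ : ℤ) : ℝ) = m := by rw [← hαdef]; exact hmα.symm
        apply hirr.ne_int ⌊m * Real.sqrt 2⌋
        rw [hm', ← hβdef, ← hmβ]
end
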